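/- Let t ≥ 3 and let q be a prime power. If A is a matrix over F_q with at least (qt)^{2^t} rows such that every standard basis vector and every vector of support size exactly three is a column of A, then the matroid M[A] has a PG(t-1, q)-minor. -/

import Mathlib

open Set Matroid

universe u

/-- The contraction `M / C`, defined via duality and restriction. -/
noncomputable def Matroid.contractSet {α : Type*} (M : Matroid α) (C : Set α) : Matroid α :=
  (M✶ ↾ (M.E \ C))✶

/-- `N` is a minor of `M`: it is obtained from `M` by contracting a set `C` and
deleting a set `D`. -/
def Matroid.IsMinorOf {α : Type*} (N M : Matroid α) : Prop :=
  ∃ C D : Set α, N = (M.contractSet C) ↾ ((M.contractSet C).E \ D)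

/-- `M` is represented by the matrix whose column indexed by `e : α` is `A e`. -/
def Matroid.RepBy {α F : Type*} [Field F] {n : ℕ} (M : Matroid α) (A : α → Fin n → F) : Prop :=
  ∀ I : Set α, M.Indep I ↔ I ⊆ M.E ∧ LinearIndependent F (fun e : I => A e.1)

noncomputable def stdv {F : Type*} [Semiring F] {n : ℕ} (x : Fin n) : Fin n → F := Pi.single x 1

@[simp] lemma stdv_same {F : Type*} [Semiring F] {n : ℕ} (x : Fin n) : stdv (F := F) x x = 1 :=
  Pi.single_eq_same x 1

lemma stdv_ne {F : Type*} [Semiring F] {n : ℕ} {x y : Fin n} (h : y ≠ x) :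
    stdv (F := F) x y = 0 := Pi.single_eq_of_ne h 1


/-- A "triangular" family of vectors is linearly independent. -/
lemma triangular_li {F : Type*} [Field F] {n : ℕ} {ι : Type*} (V : ι → Fin n → F)
    (κ : ι → Fin n) (hinj : Function.Injective κ) (hdiag : ∀ i, V i (κ i) ≠ 0)
    (htri : ∀ i i', κ i < κ i' → V i (κ i') = 0) : LinearIndependent F V := by
  rw [linearIndependent_iff]
  intro l hl
  by_contra hne
  have hsupp : l.support.Nonempty := Finsupp.support_nonempty_iff.2 hne
  obtain ⟨i0, hi0, hmax⟩ := Finset.exists_max_image l.support κ hsupp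
  have hev := congrFun hl (κ i0)
  rw [Finsupp.linearCombination_apply, Finsupp.sum] at hev
  have : (∑ i ∈ l.support, l i • V i) (κ i0) = l i0 * V i0 (κ i0) := by
    rw [Finset.sum_apply]
    refine Finset.sum_eq_single i0 (fun i hi hne' => ?_) (fun h => absurd hi0 h)
    have hlt : κ i < κ i0 := lt_of_le_of_ne (hmax i hi) (fun h => hne' (hinj h))
    simp [htri i i0 hlt]
  rw [this] at hev
  have hl0 : l i0 = 0 := by
    rcases mul_eq_zero.1 hev with h | h
    · exact h
    · exact absurd h (hdiag i0)
  exact (Finsupp.mem_support_iff.1 hi0) hl0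


lemma support_three {F : Type*} [Field F] {n : ℕ} {x y z : Fin n} (hxy : x ≠ y) (hxz : x ≠ z)
    (hyz : y ≠ z) {a b c : F} (ha : a ≠ 0) (hb : b ≠ 0) (hc : c ≠ 0) :
    {i | (a • stdv (F := F) x + b • stdv (F := F) y + c • stdv (F := F) z) i ≠ 0}.ncard
      = 3 := by
  have hval : ∀ i, (a • stdv (F := F) x + b • stdv (F := F) y + c • stdv (F := F) z) i
      = a * stdv (F := F) x i + b * stdv (F := F) y i + c * stdv (F := F) z i :=
    fun i => rfl
  have hset : {i | (a • stdv (F := F) x + b • stdv (F := F) y + c • stdv (F := F) z) i ≠ 0}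
      = {x, y, z} := by
    ext i
    simp only [mem_setOf_eq, hval, mem_insert_iff, mem_singleton_iff]
    rcases eq_or_ne i x with rfl | hix
    · rw [stdv_same, stdv_ne hxy, stdv_ne hxz]
      simp [ha]
    · rcases eq_or_ne i y with rfl | hiy
      · rw [stdv_same, stdv_ne (Ne.symm hxy), stdv_ne hyz]
        simp [hb, hix]
      · rcases eq_or_ne i z with rfl | hiz
        · rw [stdv_same, stdv_ne (Ne.symm hxz), stdv_ne (Ne.symm hyz)]
          simp [hc, hix, hiy]
        · rw [stdv_ne hix, stdv_ne hiy, stdv_ne hiz]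
          simp [hix, hiy, hiz]
  rw [hset]
  exact Set.ncard_eq_three.2 ⟨x, y, z, hxy, hxz, hyz, rfl⟩


lemma contractSet_indep_iff {α : Type*} {M : Matroid α} {C I : Set α} (hC : M.Indep C) :
    (M.contractSet C).Indep I ↔ I ⊆ M.E \ C ∧ M.Indep (I ∪ C) := by
  have hCE : C ⊆ M.E := hC.subset_ground
  have hR : M.E \ C ⊆ M✶.E := by rw [dual_ground]; exact diff_subset
  rw [Matroid.contractSet, dual_indep_iff_exists']
  simp only [restrict_ground_eq]
  constructor
  · rintro ⟨hIR, B, hB, hIB⟩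
    rw [isBase_restrict_iff hR] at hB
    obtain ⟨B', hB', hBB'⟩ := hB.indep.exists_isBase_superset
    have hB'E : B' ⊆ M.E := by rw [← dual_ground]; exact hB'.subset_ground
    have hBeq : B = B' ∩ (M.E \ C) :=
      hB.eq_of_subset_indep (hB'.indep.subset inter_subset_left)
        (subset_inter hBB' hB.subset) inter_subset_right
    have hbase0 : M.IsBase (M.E \ B') := hB'.compl_isBase_of_dual
    have hbasisC : M.IsBasis ((M.E \ B') ∩ C) C := by
      refine (hbase0.inter_isBasis_iff_compl_inter_isBasis_dual hCE).2 ?_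
      rw [diff_diff_cancel_left hB'E, ← hBeq]
      exact hB
    have hCB0 : C ⊆ M.E \ B' := by
      have h := hbasisC.eq_of_subset_indep hC inter_subset_right Subset.rfl
      rw [← h]; exact inter_subset_left
    refine ⟨hIR, (hbase0.indep).subset (union_subset ?_ hCB0)⟩
    intro x hx
    refine ⟨(hIR hx).1, fun hxB' => ?_⟩
    have hsub : B' ⊆ B ∪ C := by
      intro y hy
      by_cases hyC : y ∈ C
      · exact Or.inr hyC
      · exact Or.inl (hBeq ▸ ⟨hy, hB'E hy, hyC⟩)
    rcases hsub hxB' with h | h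
    · exact (disjoint_left.1 hIB) hx h
    · exact (hIR hx).2 h
  · rintro ⟨hIR, hIC⟩
    obtain ⟨B₀, hB₀, hICB₀⟩ := hIC.exists_isBase_superset
    have hCB₀ : C ⊆ B₀ := (union_subset_iff.1 hICB₀).2
    have h1 : M.IsBasis (B₀ ∩ C) C := by
      rw [inter_eq_right.2 hCB₀]
      exact hC.isBasis_self
    have h2 := hB₀.compl_inter_isBasis_of_inter_isBasis h1
    rw [inter_eq_left.2 (diff_subset_diff_right hCB₀)] at h2
    refine ⟨hIR, M.E \ B₀, (isBase_restrict_iff hR).2 h2, ?_⟩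
    exact disjoint_left.2 fun x hxI hx => hx.2 (hICB₀ (Or.inl hxI))

lemma point_gadget {F : Type*} [Field F] {t n : ℕ} (o : Fin t → Fin n)
    (g : Fin (t+1) → Fin n) (ho : Function.Injective o) (hg : Function.Injective g)
    (hog : ∀ i j, o i ≠ g j) (v : Fin t → F) (hv : v ≠ 0) :
    ∃ (z : Fin (t+1) → Fin n → F) (w : Fin n → F),
      (∀ k, {i | z k i ≠ 0}.ncard = 3 ∨ ∃ a, z k = stdv a) ∧
      {i | w i ≠ 0}.ncard = 3 ∧
      (∀ k, z k (g k) ≠ 0) ∧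
      (∀ k j : Fin (t+1), (k:ℕ) < (j:ℕ) → z k (g j) = 0) ∧
      (∀ k i, z k i ≠ 0 → i ∈ range o ∪ range g) ∧
      w - (∑ i, v i • stdv (o i)) ∈ Submodule.span F (Set.range z) := by
  classical
  -- support enumeration
  set Pf : Finset (Fin t) := Finset.univ.filter (fun i => v i ≠ 0) with hPf
  set s : ℕ := Pf.card with hscard
  have hs1 : 1 ≤ s := by
    rw [hscard]
    refine Finset.card_pos.2 ?_
    obtain ⟨i, hi⟩ := Function.ne_iff.1 hv
    simp only [Pi.zero_apply] at hi
    exact ⟨i, by simp [hPf, hi]⟩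
  have hst : s ≤ t := by
    rw [hscard]
    calc Pf.card ≤ Finset.univ.card := Finset.card_le_univ _
    _ = t := by simp
  set en : Fin s → Fin t := fun k => (Pf.equivFin.symm k : Fin t) with hen
  have hen_inj : Function.Injective en := fun a b hab => by
    have := Subtype.ext hab
    simpa using Pf.equivFin.symm.injective this
  have hen_mem : ∀ k, v (en k) ≠ 0 := fun k => by
    have h2 := (Pf.equivFin.symm k).2
    exact (Finset.mem_filter.1 h2).2
  set en' : ℕ → Fin t := fun k => if h : k < s then en ⟨k, h⟩ else en ⟨0, hs1⟩ with hen'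
  have hv' : ∀ k, v (en' k) ≠ 0 := fun k => by
    rw [hen']; dsimp only; split_ifs <;> exact hen_mem _
  have hen'_inj : ∀ k j, k < s → j < s → en' k = en' j → k = j := by
    intro k j hk hj h
    rw [hen'] at h; dsimp only at h
    rw [dif_pos hk, dif_pos hj] at h
    simpa [Fin.ext_iff] using hen_inj h
  set finv : ℕ → Fin (t+1) := fun k => ⟨min k t, lt_of_le_of_lt (min_le_right _ _) (Nat.lt_succ_self t)⟩ with hfinv
  have hfinval : ∀ a, a ≤ t → ((finv a : ℕ) = a) := by
    intro a ha; rw [hfinv]; simp [min_eq_left ha]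
  set Lc : ℕ → F := fun k => if k = 0 then v (en' 0) else 1 with hLc
  set Lx : ℕ → Fin n := fun k => if k = 0 then o (en' 0) else g (finv (k-1)) with hLx
  have hLc0 : ∀ k, Lc k ≠ 0 := by
    intro k; rw [hLc]; dsimp only; split_ifs
    · exact hv' 0
    · exact one_ne_zero
  set z : Fin (t+1) → Fin n → F := fun k =>
    if (k:ℕ) < s - 1 then
      Lc k • stdv (Lx k) + v (en' (k+1)) • stdv (o (en' (k+1))) + (-1 : F) • stdv (g k)
    else stdv (g k) with hz
  set w : Fin n → F :=
    Lc (s-1) • stdv (Lx (s-1)) + (1:F) • stdv (g (finv (s-1))) + (1:F) • stdv (g (finv s))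
    with hw
  -- basic coordinate distinctness facts
  have hLxo : ∀ k, k < s - 1 → Lx k ≠ o (en' (k+1)) := by
    intro k hk
    rw [hLx]; dsimp only; split_ifs with h0
    · subst h0
      intro hc
      have := ho hc
      have h01 : (0:ℕ) = 1 := hen'_inj 0 1 (by omega) (by omega) this
      omega
    · exact fun hc => (hog _ _) hc.symm
  have hfinv_ne : ∀ (a : ℕ) (j : Fin (t+1)), a ≤ t → a ≠ (j:ℕ) → finv a ≠ j := by
    intro a j ha hne h
    exact hne (by rw [← hfinval a ha, h])
  have hLx_ne_g : ∀ (k : ℕ) (j : Fin (t+1)), k ≤ s - 1 → (k ≠ 0 → k - 1 ≠ (j:ℕ)) → Lx k ≠ g j := by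
    intro k j hk h2
    rw [hLx]; dsimp only; split_ifs with h0
    · exact hog _ _
    · intro hc
      exact hfinv_ne (k-1) j (by omega) (h2 h0) (hg hc)
  refine ⟨z, w, ?_, ?_, ?_, ?_, ?_, ?_⟩
  · -- each gadget is a column candidate
    intro k
    rw [hz]; dsimp only
    split_ifs with hk
    · left
      refine support_three ?_ ?_ ?_ (hLc0 _) (hv' _) (by norm_num)
      · exact hLxo k hk
      · exact hLx_ne_g k k (le_of_lt hk) (fun h0 => by omega)
      · exact hog _ _
    · right; exact ⟨g k, rfl⟩
  · -- w has support exactly three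
    rw [hw]
    refine support_three ?_ ?_ ?_ (hLc0 _) one_ne_zero one_ne_zero
    · refine hLx_ne_g (s-1) (finv (s-1)) le_rfl (fun h0 => ?_)
      rw [hfinval _ (by omega)]; omega
    · refine hLx_ne_g (s-1) (finv s) le_rfl (fun h0 => ?_)
      rw [hfinval _ hst]; omega
    · intro h
      have h2 := congrArg Fin.val (hg h)
      rw [hfinval _ (by omega), hfinval _ hst] at h2
      omega
  · -- diagonal entries nonzero
    intro k
    rw [hz]; dsimp only
    split_ifs with hk
    · have e1 : stdv (F := F) (Lx ↑k) (g k) = 0 :=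
        stdv_ne (Ne.symm (hLx_ne_g ↑k k (le_of_lt hk) (fun h0 => by omega)))
      have e2 : stdv (F := F) (o (en' (↑k+1))) (g k) = 0 := stdv_ne (Ne.symm (hog _ _))
      simp [e1, e2]
    · simp
  · -- vanishing at later private coordinates
    intro k j hkj
    have hne_gg : g k ≠ g j := fun h => by
      have h2 := congrArg Fin.val (hg h); omega
    rw [hz]; dsimp only
    split_ifs with hk
    · have e1 : stdv (F := F) (Lx ↑k) (g j) = 0 :=
        stdv_ne (Ne.symm (hLx_ne_g ↑k j (le_of_lt hk) (fun h0 => by omega)))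
      have e2 : stdv (F := F) (o (en' (↑k+1))) (g j) = 0 := stdv_ne (Ne.symm (hog _ _))
      have e3 : stdv (F := F) (g k) (g j) = 0 := stdv_ne (Ne.symm hne_gg)
      simp [e1, e2, e3]
    · exact stdv_ne (Ne.symm hne_gg)
  · -- support control
    intro k i hi
    by_contra hni
    simp only [mem_union, mem_range, not_or, not_exists] at hni
    obtain ⟨hno, hng⟩ := hni
    rw [hz] at hi; dsimp only at hi
    have hLxi : stdv (F := F) (Lx ↑k) i = 0 := by
      rw [hLx]; dsimp only; split_ifs
      · exact stdv_ne (Ne.symm (hno _))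
      · exact stdv_ne (Ne.symm (hng _))
    split_ifs at hi with hk
    · have h2 : stdv (F := F) (o (en' (↑k+1))) i = 0 := stdv_ne (Ne.symm (hno _))
      have h3 : stdv (F := F) (g k) i = 0 := stdv_ne (Ne.symm (hng _))
      simp [hLxi, h2, h3] at hi
    · exact hi (stdv_ne (Ne.symm (hng _)))
  · -- span condition
    set σ : ℕ → (Fin n → F) := fun k => ∑ j ∈ Finset.range (k+1), v (en' j) • stdv (o (en' j))
      with hσ
    have claim1 : ∀ k, k ≤ s - 1 →
        Lc k • stdv (F := F) (Lx k) - σ k ∈ Submodule.span F (Set.range z) := by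
      intro k
      induction k with
      | zero =>
        intro _
        have h0 : Lc 0 • stdv (F := F) (Lx 0) = σ 0 := by
          rw [hσ]; dsimp only
          rw [Finset.sum_range_one, hLc, hLx]; dsimp only
          rw [if_pos rfl, if_pos rfl]
        rw [h0, sub_self]; exact Submodule.zero_mem _
      | succ k ih =>
        intro hk
        have hkt : k < t + 1 := by omega
        set kF : Fin (t+1) := ⟨k, hkt⟩ with hkF
        have hzk : z kF = Lc ↑kF • stdv (Lx ↑kF) + v (en' (↑kF+1)) • stdv (o (en' (↑kF+1)))
            + (-1:F) • stdv (g kF) := by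
          rw [hz]; dsimp only
          rw [if_pos (by omega : k < s - 1)]
        have hL1 : Lc (k+1) = 1 := by rw [hLc]; simp
        have hLx1 : Lx (k+1) = g (finv k) := by rw [hLx]; simp
        have hgfin : g (finv k) = g kF := by
          congr 1
          rw [Fin.ext_iff, hfinval k (by omega), hkF]
        have hσs : σ (k+1) = σ k + v (en' (k+1)) • stdv (o (en' (k+1))) := by
          rw [hσ]; dsimp only; rw [Finset.sum_range_succ]
        have key : Lc (k+1) • stdv (F := F) (Lx (k+1)) - σ (k+1)
            = (Lc k • stdv (F := F) (Lx k) - σ k) - z kF := by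
          rw [hL1, hLx1, hgfin, hσs, hzk, one_smul]
          have hkFv : (kF : ℕ) = k := rfl
          rw [hkFv]
          module
        rw [key]
        exact Submodule.sub_mem _ (ih (by omega)) (Submodule.subset_span ⟨kF, rfl⟩)
    have hen'eq : ∀ j : Fin s, en' ↑j = en j := by
      intro j
      rw [hen']; dsimp only
      rw [dif_pos j.isLt]
    have hσtop : σ (s-1) = ∑ i, v i • stdv (F := F) (o i) := by
      rw [hσ]; dsimp only
      have hrange : s - 1 + 1 = s := by omega
      rw [hrange]
      rw [Finset.sum_range (fun j => v (en' j) • stdv (F := F) (o (en' j)))]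
      have e1 : ∀ j : Fin s, v (en' ↑j) • stdv (F := F) (o (en' ↑j))
          = v (en j) • stdv (F := F) (o (en j)) := by
        intro j; rw [hen'eq]
      rw [Fintype.sum_congr _ _ e1]
      have e2 : ∑ j : Fin s, v (en j) • stdv (F := F) (o (en j))
          = ∑ x : ↥Pf, v ↑x • stdv (F := F) (o ↑x) :=
        Equiv.sum_comp Pf.equivFin.symm (fun x : ↥Pf => v ↑x • stdv (F := F) (o ↑x))
      rw [e2, Finset.sum_coe_sort Pf (fun x => v x • stdv (F := F) (o x))]
      rw [hPf]
      refine Finset.sum_filter_of_ne ?_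
      intro x _ hfx h0
      exact hfx (by rw [h0, zero_smul])
    have hfs1 : ((finv (s-1) : ℕ)) = s - 1 := hfinval _ (by omega)
    have hfss : ((finv s : ℕ)) = s := hfinval _ hst
    have hz1 : z (finv (s-1)) = stdv (g (finv (s-1))) := by
      rw [hz]; dsimp only; rw [if_neg (by rw [hfs1]; omega)]
    have hz2 : z (finv s) = stdv (g (finv s)) := by
      rw [hz]; dsimp only; rw [if_neg (by rw [hfss]; omega)]
    have key : w - (∑ i, v i • stdv (F := F) (o i))
        = (Lc (s-1) • stdv (F := F) (Lx (s-1)) - σ (s-1)) + z (finv (s-1)) + z (finv s) := by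
      rw [← hσtop, hz1, hz2, hw]
      module
    rw [key]
    exact Submodule.add_mem _ (Submodule.add_mem _ (claim1 (s-1) le_rfl)
      (Submodule.subset_span ⟨_, rfl⟩)) (Submodule.subset_span ⟨_, rfl⟩)


lemma block_arith {T a b x y : ℕ} (hx : x < T) (hy : y < T) (h : a * T + x = b * T + y) :
    a = b ∧ x = y := by
  rcases Nat.lt_trichotomy a b with hab | hab | hab
  · exfalso
    have h1 : (a+1) * T ≤ b * T := Nat.mul_le_mul_right _ (by omega)
    have h2 : (a+1) * T = a * T + T := by ring
    omega
  · subst hab; omega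
  · exfalso
    have h1 : (b+1) * T ≤ a * T := Nat.mul_le_mul_right _ (by omega)
    have h2 : (b+1) * T = b * T + T := by ring
    omega

lemma two_pow_bound {t : ℕ} (ht : 3 ≤ t) : t + 2 ≤ 2 ^ t := by
  induction t with
  | zero => omega
  | succ m ih =>
    rcases Nat.lt_or_ge m 3 with hm | hm
    · interval_cases m <;> (try omega) <;> decide
    · have h1 : 1 ≤ 2 ^ m := Nat.one_le_two_pow
      have := ih (by omega)
      rw [pow_succ]; omega

lemma exists_gadgets {F : Type u} [Field F] [Fintype F] {t n : ℕ} (ht : 3 ≤ t)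
    (hn : (Fintype.card F * t) ^ 2 ^ t ≤ n) :
    ∃ (ι : Type u) (ζ : ι → Fin n → F) (L : (Fin t → F) →ₗ[F] (Fin n → F))
      (w : Projectivization F (Fin t → F) → Fin n → F),
      Function.Injective L ∧
      (∀ i, {k | ζ i k ≠ 0}.ncard = 3 ∨ ∃ a, ζ i = stdv a) ∧
      LinearIndependent F ζ ∧
      Disjoint (Submodule.span F (Set.range ζ)) (LinearMap.range L) ∧
      (∀ p, {k | w p k ≠ 0}.ncard = 3) ∧
      (∀ p, w p - L p.rep ∈ Submodule.span F (Set.range ζ)) := by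
  classical
  haveI hPfin : Fintype (Projectivization F (Fin t → F)) :=
    Fintype.ofSurjective (fun v : {v : Fin t → F // v ≠ 0} => Projectivization.mk F v.1 v.2)
      (fun p => ⟨⟨p.rep, p.rep_nonzero⟩, p.mk_rep⟩)
  set q := Fintype.card F with hqdef
  have hq : 2 ≤ q := Fintype.one_lt_card
  set NP := Fintype.card (Projectivization F (Fin t → F)) with hNP
  have hcard : NP ≤ q ^ t := by
    calc NP ≤ Fintype.card {v : Fin t → F // v ≠ 0} :=
          Fintype.card_le_of_surjective _ (fun p => ⟨⟨p.rep, p.rep_nonzero⟩, p.mk_rep⟩)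
    _ ≤ Fintype.card (Fin t → F) := Fintype.card_subtype_le _
    _ = q ^ t := by simp [hqdef]
  have hpow : t + 2 ≤ 2 ^ t := two_pow_bound ht
  have hqt1 : 1 ≤ q ^ t := Nat.one_le_pow _ _ (by omega)
  have key : t + NP * (t+1) ≤ n := by
    have h1 : NP * (t+1) ≤ q^t * (t+1) := Nat.mul_le_mul_right _ hcard
    have h2 : t + q^t * (t+1) ≤ q^t * (2*t+2) := by
      have : q^t * (2*t+2) = q^t * (t+1) + q^t * (t+1) := by ring
      have ht' : t ≤ q^t * (t+1) := by nlinarith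
      omega
    have h3 : 2*t+2 ≤ t^2 := by nlinarith
    have h4 : q^t * (2*t+2) ≤ q^t * t^2 := Nat.mul_le_mul_left _ h3
    have h5 : q^t * t^2 ≤ q^(t+2) * t^(t+2) := by
      refine Nat.mul_le_mul ?_ ?_
      · exact Nat.pow_le_pow_right (by omega) (by omega)
      · exact Nat.pow_le_pow_right (by omega) (by omega)
    have h6 : q^(t+2) * t^(t+2) = (q*t)^(t+2) := (mul_pow q t (t+2)).symm
    have h7 : (q*t)^(t+2) ≤ (q*t)^(2^t) := Nat.pow_le_pow_right (by positivity) hpow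
    calc t + NP * (t+1) ≤ t + q^t * (t+1) := by omega
    _ ≤ q^t * (2*t+2) := h2
    _ ≤ q^t * t^2 := h4
    _ ≤ q^(t+2) * t^(t+2) := h5
    _ = (q*t)^(t+2) := h6
    _ ≤ (q*t)^(2^t) := h7
    _ ≤ n := hn
  have htn : t ≤ n := by
    have : 0 ≤ NP * (t+1) := Nat.zero_le _
    omega
  set eP := Fintype.equivFin (Projectivization F (Fin t → F)) with heP
  set o : Fin t → Fin n := fun i => ⟨i, lt_of_lt_of_le i.isLt htn⟩ with ho_def
  have ho : Function.Injective o := by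
    intro a b h
    have := congrArg Fin.val h
    simpa [ho_def, Fin.ext_iff] using this
  have hgbound : ∀ (p : Projectivization F (Fin t → F)) (j : Fin (t+1)),
      t + (eP p : ℕ) * (t+1) + (j : ℕ) < n := by
    intro p j
    have hk := (eP p).isLt
    have hj := j.isLt
    have h1 : ((eP p : ℕ) + 1) * (t+1) ≤ NP * (t+1) := Nat.mul_le_mul_right _ (by omega)
    have h2 : (eP p : ℕ) * (t+1) + (t+1) = ((eP p : ℕ)+1)*(t+1) := by ring
    omega
  set g : Projectivization F (Fin t → F) → Fin (t+1) → Fin n :=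
    fun p j => ⟨t + (eP p : ℕ) * (t+1) + (j : ℕ), hgbound p j⟩ with hg_def
  have hgval : ∀ p j, (g p j : ℕ) = t + (eP p : ℕ) * (t+1) + (j : ℕ) := fun p j => rfl
  have hoval : ∀ i, (o i : ℕ) = (i : ℕ) := fun i => rfl
  have hblock : ∀ (p p' : Projectivization F (Fin t → F)) (j j' : Fin (t+1)),
      g p j = g p' j' → p = p' ∧ j = j' := by
    intro p p' j j' h
    have hv := congrArg Fin.val h
    rw [hgval, hgval] at hv
    have hv' : (eP p : ℕ) * (t+1) + (j : ℕ) = (eP p' : ℕ) * (t+1) + (j' : ℕ) := by omega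
    obtain ⟨h1, h2⟩ := block_arith j.isLt j'.isLt hv'
    exact ⟨eP.injective (Fin.ext h1), Fin.ext h2⟩
  have hog : ∀ p i j, o i ≠ g p j := by
    intro p i j h
    have := congrArg Fin.val h
    rw [hoval, hgval] at this
    have := i.isLt
    omega
  have hpoint := fun p : Projectivization F (Fin t → F) =>
    point_gadget o (g p) ho (fun j j' h => (hblock p p j j' h).2) (hog p) p.rep p.rep_nonzero
  choose z w hcol hwcard hdiag htri hsuppz hspan using hpoint
  set ζ : (Projectivization F (Fin t → F)) × Fin (t+1) → Fin n → F :=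
    fun pk => z pk.1 pk.2 with hζ_def
  set κ : (Projectivization F (Fin t → F)) × Fin (t+1) → Fin n :=
    fun pk => g pk.1 pk.2 with hκ_def
  set L : (Fin t → F) →ₗ[F] (Fin n → F) :=
    { toFun := fun u => ∑ i, u i • stdv (o i),
      map_add' := by intro a b; simp [add_smul, Finset.sum_add_distrib],
      map_smul' := by intro c a; simp [smul_smul, Finset.smul_sum] } with hL
  have hLapp : ∀ u, L u = ∑ i, u i • stdv (F := F) (o i) := fun u => rfl
  have hLval : ∀ (u : Fin t → F) (i0 : Fin t), L u (o i0) = u i0 := by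
    intro u i0
    rw [hLapp, Finset.sum_apply]
    rw [Finset.sum_eq_single i0]
    · simp
    · intro i _ hne
      have : stdv (F := F) (o i) (o i0) = 0 := stdv_ne (fun hc => hne (ho hc).symm)
      simp [this]
    · intro h; exact absurd (Finset.mem_univ i0) h
  have hLinj : Function.Injective L := by
    intro a b h
    funext i
    rw [← hLval a i, ← hLval b i, h]
  -- the combined triangular family
  have hLI : LinearIndependent F
      (Sum.elim ζ (fun i : Fin t => stdv (F := F) (o i))) := by
    refine triangular_li _ (Sum.elim κ o) ?_ ?_ ?_
    · intro a b hab
      rcases a with a | a <;> rcases b with b | b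
      · obtain ⟨h1, h2⟩ := hblock a.1 b.1 a.2 b.2 hab
        exact congrArg Sum.inl (Prod.ext h1 h2)
      · exfalso
        have hval : t + (eP a.1 : ℕ) * (t+1) + (a.2 : ℕ) = (b : ℕ) := congrArg Fin.val hab
        have h2 := b.isLt
        omega
      · exfalso
        have hval : (a : ℕ) = t + (eP b.1 : ℕ) * (t+1) + (b.2 : ℕ) := congrArg Fin.val hab
        have h2 := a.isLt
        omega
      · exact congrArg Sum.inr (ho hab)
    · intro a
      rcases a with ⟨p, k⟩ | i
      · exact hdiag p k
      · simp
    · intro a b hab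
      rcases a with ⟨p, k⟩ | i <;> rcases b with ⟨p', j⟩ | i'
      · simp only [Sum.elim_inl]
        by_cases hpp : p = p'
        · subst hpp
          have hval : t + (eP p : ℕ) * (t+1) + (k : ℕ)
              < t + (eP p : ℕ) * (t+1) + (j : ℕ) := hab
          exact htri p k j (by omega)
        · by_contra hzne
          have hmem := hsuppz p k _ hzne
          rcases hmem with ⟨i, hi⟩ | ⟨j'', hj''⟩
          · have hval : (i : ℕ) = t + (eP p' : ℕ) * (t+1) + (j : ℕ) := congrArg Fin.val hi
            have h2 := i.isLt
            omega
          · exact hpp (hblock _ _ _ _ hj'').1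
      · exfalso
        have hval : t + (eP p : ℕ) * (t+1) + (k : ℕ) < (i' : ℕ) := hab
        have h2 := i'.isLt
        omega
      · simp only [Sum.elim_inr]
        exact stdv_ne (fun hc => hog p' i j hc.symm)
      · simp only [Sum.elim_inr]
        refine stdv_ne (fun hc => ?_)
        have h1 : i' = i := ho hc
        subst h1
        exact lt_irrefl _ hab
  rw [linearIndependent_sum] at hLI
  obtain ⟨hζli, _, hdisj0⟩ := hLI
  have hcompl : (Sum.elim ζ (fun i : Fin t => stdv (F := F) (o i))) ∘ Sum.inl = ζ := rfl
  have hcompr : (Sum.elim ζ (fun i : Fin t => stdv (F := F) (o i))) ∘ Sum.inr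
      = fun i : Fin t => stdv (F := F) (o i) := rfl
  rw [hcompl] at hζli
  rw [hcompl, hcompr] at hdisj0
  have hrangeL : LinearMap.range L ≤
      Submodule.span F (Set.range (fun i : Fin t => stdv (F := F) (o i))) := by
    rintro x ⟨u, rfl⟩
    rw [hLapp]
    exact Submodule.sum_mem _ (fun i _ =>
      Submodule.smul_mem _ _ (Submodule.subset_span ⟨i, rfl⟩))
  refine ⟨(Projectivization F (Fin t → F)) × Fin (t+1), ζ, L, w, hLinj,
    fun pk => hcol pk.1 pk.2, hζli, Disjoint.mono_right hrangeL hdisj0, hwcard, ?_⟩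
  intro p
  have h1 := hspan p
  have h2 : Submodule.span F (Set.range (z p)) ≤ Submodule.span F (Set.range ζ) := by
    refine Submodule.span_mono ?_
    rintro x ⟨k, rfl⟩
    exact ⟨(p, k), rfl⟩
  have h3 : L p.rep = ∑ i, p.rep i • stdv (F := F) (o i) := hLapp _
  rw [h3]
  exact h2 h1


/-- If `A` is a matrix over `F_q` with at least `(qt)^{2^t}` rows such that every standard
basis vector and every vector of support size exactly three is a column of `A`, then the
column matroid `M[A]` has a `PG(t-1, q)`-minor. -/
theorem pg_minor {E F : Type*} [Field F] [Fintype F]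
    (t : ℕ) (ht : 3 ≤ t) {n : ℕ}
    (hn : (Fintype.card F * t) ^ 2 ^ t ≤ n)
    (A : E → Fin n → F)
    (hbasis : ∀ i : Fin n, ∃ e : E, A e = Pi.single i (1 : F))
    (hsupp3 : ∀ v : Fin n → F, {i | v i ≠ 0}.ncard = 3 → ∃ e : E, A e = v)
    (M : Matroid E) (hE : M.E = Set.univ) (hM : M.RepBy A) :
    ∃ N : Matroid E, N.IsMinorOf M ∧
      ∃ φ : Projectivization F (Fin t → F) → E,
        Function.Injective φ ∧ Set.range φ = N.E ∧
        ∀ S : Set (Projectivization F (Fin t → F)),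
          (N.Indep (φ '' S) ↔ LinearIndependent F (fun s : S => s.1.rep)) := by
  classical
  obtain ⟨ι, ζ, L, w, hLinj, hζcol, hζli, hdisj, hwcard, hwspan⟩ := exists_gadgets ht hn
  -- choose matroid elements representing the gadget columns and point columns
  have hcolζ : ∀ i, ∃ e : E, A e = ζ i := by
    intro i
    rcases hζcol i with h3 | ⟨a, ha⟩
    · exact hsupp3 _ h3
    · obtain ⟨e, he⟩ := hbasis a
      exact ⟨e, by rw [he, ha]; rfl⟩
  choose eζ hAeζ using hcolζ
  choose ew hAew using fun p => hsupp3 (w p) (hwcard p)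
  have hLrep_ne : ∀ p : Projectivization F (Fin t → F), L p.rep ≠ 0 :=
    fun p h => p.rep_nonzero (hLinj (by rw [h, map_zero]))
  have hwnotspan : ∀ p, w p ∉ Submodule.span F (Set.range ζ) := by
    intro p hmem
    have h1 : L p.rep ∈ Submodule.span F (Set.range ζ) := by
      have h2 := Submodule.sub_mem _ hmem (hwspan p)
      simpa using h2
    have h2 : L p.rep ∈ LinearMap.range L := ⟨p.rep, rfl⟩
    exact hLrep_ne p ((Submodule.disjoint_def.1 hdisj) _ h1 h2)
  have hwne : ∀ p i, w p ≠ ζ i := fun p i h =>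
    hwnotspan p (h ▸ Submodule.subset_span ⟨i, rfl⟩)
  have hrep_inj : ∀ p q : Projectivization F (Fin t → F), p.rep = q.rep → p = q := by
    intro p q h
    rw [← Projectivization.mk_rep p, ← Projectivization.mk_rep q]
    exact (Projectivization.mk_eq_mk_iff F _ _ _ _).2 ⟨1, by simp [h]⟩
  have hwinj : Function.Injective w := by
    intro p q h
    apply hrep_inj
    have h3 := Submodule.sub_mem _ (hwspan p) (hwspan q)
    have h4 : (w p - L p.rep) - (w q - L q.rep) = L q.rep - L p.rep := by
      rw [h]; abel
    rw [h4] at h3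
    have h5 : L q.rep - L p.rep ∈ LinearMap.range L := ⟨q.rep - p.rep, by rw [map_sub]⟩
    have h6 : L q.rep - L p.rep = 0 := (Submodule.disjoint_def.1 hdisj) _ h3 h5
    have h7 : L q.rep = L p.rep := by
      have := sub_eq_zero.1 h6; exact this
    exact (hLinj h7).symm
  have heζinj : Function.Injective eζ := by
    intro a b h
    have h1 : ζ a = ζ b := by rw [← hAeζ a, ← hAeζ b, h]
    exact hζli.injective h1
  have hewinj : Function.Injective ew := fun p q h =>
    hwinj (by rw [← hAew p, ← hAew q, h])
  have hewnotζ : ∀ p i, ew p ≠ eζ i := fun p i h =>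
    hwne p i (by rw [← hAew p, ← hAeζ i, h])
  set C := Set.range eζ with hC
  have hCsub : C ⊆ M.E := by rw [hE]; exact subset_univ _
  have hCindep : M.Indep C := by
    rw [hM C]
    refine ⟨hCsub, ?_⟩
    refine (linearIndependent_equiv' (Equiv.ofInjective eζ heζinj)
      (g := ζ) ?_).1 hζli
    funext i
    show A (eζ i) = ζ i
    exact hAeζ i
  set Mc := M.contractSet C with hMc
  have hMcE : Mc.E = M.E \ C := rfl
  have hranew : Set.range ew ⊆ Mc.E := by
    rw [hMcE, hE]
    rintro x ⟨p, rfl⟩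
    exact ⟨trivial, fun hc => by
      obtain ⟨i, hi⟩ := hc
      exact hewnotζ p i hi.symm⟩
  set D := Mc.E \ Set.range ew with hD
  refine ⟨Mc ↾ (Mc.E \ D), ⟨C, D, rfl⟩, ew, hewinj, ?_, ?_⟩
  · rw [restrict_ground_eq, hD, diff_diff_cancel_left hranew]
  intro S
  rw [restrict_indep_iff]
  have himg : ew '' S ⊆ Mc.E \ D := by
    rw [hD, diff_diff_cancel_left hranew]
    exact image_subset_range _ _
  have hsub2 : ew '' S ⊆ M.E \ C :=
    (image_subset_range _ _).trans (by rw [← hMcE]; exact hranew)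
  rw [hMc, contractSet_indep_iff hCindep]
  -- the linear-algebraic heart
  have hmain : M.Indep (ew '' S ∪ C) ↔ LinearIndependent F (fun s : S => s.1.rep) := by
    rw [hM (ew '' S ∪ C)]
    have htriv : ew '' S ∪ C ⊆ M.E := by rw [hE]; exact subset_univ _
    set η : ↥S ⊕ ι → E := Sum.elim (fun s : ↥S => ew s.1) eζ with hη
    have hηinj : Function.Injective η := by
      intro a b hab
      rcases a with a | a <;> rcases b with b | b
      · exact congrArg Sum.inl (Subtype.ext (hewinj hab))
      · exact absurd hab (hewnotζ a.1 b)
      · exact absurd hab.symm (hewnotζ b.1 a)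
      · exact congrArg Sum.inr (heζinj hab)
    have hηrange : Set.range η = ew '' S ∪ C := by
      rw [hη, Sum.elim_range]
      congr 1
      exact (image_eq_range ew S).symm
    have hAη : A ∘ η = Sum.elim (fun s : ↥S => w s.1) ζ := by
      funext x
      rcases x with s | i
      · exact hAew s.1
      · exact hAeζ i
    have hiff1 : LinearIndependent F (fun e : ↥(ew '' S ∪ C) => A e.1) ↔
        LinearIndependent F (A ∘ η) := by
      rw [← hηrange]
      exact (linearIndependent_equiv' (Equiv.ofInjective η hηinj) rfl).symm
    rw [iff_true_intro htriv, true_and, hiff1, hAη, linearIndependent_sum]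
    simp only [Sum.elim_comp_inl, Sum.elim_comp_inr]
    set ws : ↥S → Fin n → F := fun s => w s.1 with hws_def
    set urep : ↥S → Fin t → F := fun s => (s.1).rep with hurep_def
    have key1 : ∀ l : ↥S →₀ F,
        Finsupp.linearCombination F ws l - L (Finsupp.linearCombination F urep l)
          ∈ Submodule.span F (Set.range ζ) := by
      intro l
      rw [Finsupp.linearCombination_apply, Finsupp.linearCombination_apply, map_finsuppSum,
        ← Finsupp.sum_sub]
      refine Submodule.finsuppSum_mem F _ _ _ ?_
      intro s _
      have h1 : l s • ws s - L (l s • urep s) = l s • (w s.1 - L s.1.rep) := by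
        rw [map_smul, smul_sub]
      rw [h1]
      exact Submodule.smul_mem _ _ (hwspan s.1)
    constructor
    · rintro ⟨hws, _, hdis2⟩
      rw [linearIndependent_iff]
      intro l hl
      have hx : Finsupp.linearCombination F ws l ∈ Submodule.span F (Set.range ζ) := by
        have h2 := key1 l
        rw [show Finsupp.linearCombination F urep l
          = Finsupp.linearCombination F (fun s : ↥S => (s.1).rep) l from rfl, hl,
          map_zero, sub_zero] at h2
        exact h2
      have hx2 : Finsupp.linearCombination F ws l ∈ Submodule.span F (Set.range ws) := by
        rw [← Finsupp.range_linearCombination]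
        exact ⟨l, rfl⟩
      have h0 : Finsupp.linearCombination F ws l = 0 :=
        (Submodule.disjoint_def.1 hdis2) _ hx2 hx
      exact linearIndependent_iff.1 hws l h0
    · intro hrep
      have hwsli : LinearIndependent F ws := by
        rw [linearIndependent_iff]
        intro l hl
        have h1 : L (Finsupp.linearCombination F urep l) ∈ Submodule.span F (Set.range ζ) := by
          have h2 := key1 l
          rw [hl, zero_sub] at h2
          simpa using Submodule.neg_mem _ h2
        have h2 : L (Finsupp.linearCombination F urep l) ∈ LinearMap.range L := ⟨_, rfl⟩
        have h0 : L (Finsupp.linearCombination F urep l) = 0 :=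
          (Submodule.disjoint_def.1 hdisj) _ h1 h2
        have h3 : Finsupp.linearCombination F urep l = 0 := hLinj (by rw [h0, map_zero])
        exact linearIndependent_iff.1 hrep l h3
      refine ⟨hwsli, hζli, ?_⟩
      rw [Submodule.disjoint_def]
      intro x hx1 hx2
      rw [← Finsupp.range_linearCombination] at hx1
      obtain ⟨l, hl⟩ := hx1
      have h1 : L (Finsupp.linearCombination F urep l) ∈ Submodule.span F (Set.range ζ) := by
        have h2 := Submodule.sub_mem _ (hl ▸ hx2) (key1 l)
        simpa using h2
      have h2 : L (Finsupp.linearCombination F urep l) ∈ LinearMap.range L := ⟨_, rfl⟩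
      have h0 : L (Finsupp.linearCombination F urep l) = 0 :=
        (Submodule.disjoint_def.1 hdisj) _ h1 h2
      have h3 : Finsupp.linearCombination F urep l = 0 := hLinj (by rw [h0, map_zero])
      have h4 : l = 0 := linearIndependent_iff.1 hrep l h3
      rw [← hl, h4, map_zero]
  constructor
  · rintro ⟨⟨_, h2⟩, _⟩
    exact hmain.1 h2
  · intro h
    exact ⟨⟨hsub2, hmain.2 h⟩, himg⟩
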